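/- arXiv:1603.07926 — 2 statements merged into one kernel-verified Lean document; each statement's English description precedes it below -/
import Mathlib

section
/- Suppose for every chain length h and every fork depth d ≥ n the probability of a rollback of depth d is at most e^{-c·n} for some constant c > 0 (depending on δ³ as in the common-prefix property). Then a light verifier starting from the state snapshot n blocks before the tip and applying the last n full blocks obtains the same final state as a full verifier applying all blocks from genesis, with probability at least 1 - e^{-c·n}, assuming the authenticated dictionary's root commitment is second-preimage resistant (modeled as: equal roots imply equal states). -/
open MeasureTheory

/-- Light-verifier security: if a rollback (fork) deeper than `n` occurs with
probability at most `e^{-c·n}`, the authenticated dictionary root is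
second-preimage resistant (equal roots imply equal states), and outside the fork
event the light verifier's downloaded snapshot has the root committed at height
`h - n` and it applies the last `n` blocks, then the light verifier obtains the
full verifier's state (fold of block application from genesis over the whole
chain) with probability at least `1 - e^{-c·n}`. -/
theorem stmt5 {Ω : Type*} [MeasurableSpace Ω] (P : Measure Ω) [IsProbabilityMeasure P]
    {State Block Digest : Type*}
    (apply : State → Block → State) (root : State → Digest) (genesis : State)
    (hroot : ∀ S S' : State, root S = root S' → S = S')  -- second-preimage security
    (c : ℝ) (hc : 0 < c) (n : ℕ)
    (chain : Ω → List Block) (snapshot : Ω → State)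
    (full light : Ω → State)
    (hfull : ∀ ω, full ω = (chain ω).foldl apply genesis)
    (Fork : Set Ω)
    (hFork : P Fork ≤ ENNReal.ofReal (Real.exp (-(c * n))))
    (hsnap : ∀ ω ∉ Fork,
      root (snapshot ω)
        = root (((chain ω).take ((chain ω).length - n)).foldl apply genesis))
    (hlight : ∀ ω ∉ Fork,
      light ω = ((chain ω).drop ((chain ω).length - n)).foldl apply (snapshot ω)) :
    P {ω | light ω = full ω} ≥ 1 - ENNReal.ofReal (Real.exp (-(c * n))) := by
  have hsub : Forkᶜ ⊆ {ω | light ω = full ω} := by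
    intro ω hω
    have hωF : ω ∉ Fork := hω
    have hsn : snapshot ω = ((chain ω).take ((chain ω).length - n)).foldl apply genesis :=
      hroot _ _ (hsnap ω hωF)
    show light ω = full ω
    rw [hlight ω hωF, hfull ω, hsn, ← List.foldl_append,
      List.take_append_drop]
  calc P {ω | light ω = full ω} ≥ P Forkᶜ := measure_mono hsub
    _ ≥ 1 - P Fork := by
        rw [ge_iff_le, tsub_le_iff_right]
        calc (1 : ENNReal) = P Set.univ := (measure_univ).symm
          _ = P (Forkᶜ ∪ Fork) := by rw [Set.compl_union_self]
          _ ≤ P Forkᶜ + P Fork := measure_union_le _ _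
    _ ≥ 1 - ENNReal.ofReal (Real.exp (-(c * n))) := tsub_le_tsub_left hFork 1
end

section
/- In a valid block, the coinbase box value equals constReward plus the total fees, where the fee of each non-coinbase transaction is the sum of values of the boxes it removes minus the sum of values of the boxes it creates. Consequently, if every non-coinbase transaction has nonnegative fee, the total value of all boxes in the state after applying the block equals the total value before the block plus constReward. -/
/-- Value conservation for a valid block. Transactions are indexed by `I`; `rem i`
are the boxes opened and `cre i` the boxes created by transaction `i`; the
coinbase creates the single box `cb`. If removed boxes are in the state and
pairwise disjoint, created boxes (and the coinbase box) are fresh and pairwise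
disjoint, every fee `∑ rem i - ∑ cre i` is nonnegative, and the coinbase value
equals `constReward` plus the total fees, then the total value after applying
the block equals the total value before plus `constReward`. -/
theorem stmt8 {Box ι : Type*} [DecidableEq Box] [DecidableEq ι]
    (value : Box → ℕ) (constReward : ℤ)
    (S : Finset Box) (I : Finset ι) (rem cre : ι → Finset Box) (cb : Box)
    (fee : ι → ℤ)
    (hfee_def : ∀ i ∈ I, fee i = (∑ b ∈ rem i, (value b : ℤ)) - ∑ b ∈ cre i, (value b : ℤ))
    (hfee_nonneg : ∀ i ∈ I, 0 ≤ fee i)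
    (hrem_sub : ∀ i ∈ I, rem i ⊆ S)
    (hrem_disj : ∀ i ∈ I, ∀ j ∈ I, i ≠ j → Disjoint (rem i) (rem j))
    (hcre_disj : ∀ i ∈ I, ∀ j ∈ I, i ≠ j → Disjoint (cre i) (cre j))
    (hcre_fresh : ∀ i ∈ I, Disjoint (cre i) (S \ I.biUnion rem))
    (hcb_fresh : cb ∉ (S \ I.biUnion rem) ∪ I.biUnion cre)
    (hcoinbase : (value cb : ℤ) = constReward + ∑ i ∈ I, fee i) :
    (∑ b ∈ (S \ I.biUnion rem) ∪ I.biUnion cre ∪ {cb}, (value b : ℤ))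
      = (∑ b ∈ S, (value b : ℤ)) + constReward := by
  have hdisj1 : Disjoint (S \ I.biUnion rem) (I.biUnion cre) := by
    rw [Finset.disjoint_biUnion_right]
    exact fun i hi => (hcre_fresh i hi).symm
  have hdisj2 : Disjoint ((S \ I.biUnion rem) ∪ I.biUnion cre) ({cb} : Finset Box) := by
    simpa [Finset.disjoint_singleton_right] using hcb_fresh
  rw [Finset.sum_union hdisj2, Finset.sum_union hdisj1,
    Finset.sum_biUnion (fun i hi j hj hij => hcre_disj i hi j hj hij),
    Finset.sum_sdiff_eq_sub (Finset.biUnion_subset.2 hrem_sub),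
    Finset.sum_biUnion (fun i hi j hj hij => hrem_disj i hi j hj hij),
    Finset.sum_singleton, hcoinbase]
  have : ∑ i ∈ I, fee i
      = (∑ i ∈ I, ∑ b ∈ rem i, (value b : ℤ)) - ∑ i ∈ I, ∑ b ∈ cre i, (value b : ℤ) := by
    rw [← Finset.sum_sub_distrib]
    exact Finset.sum_congr rfl hfee_def
  rw [this]; ring
end
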